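/- Under the same hypotheses as the first discrete conservation law (u_{i,j} solves D_{Δt}^α u_{i,j} = D^{(2)}_{Δx} K(u_{i,j}) on a uniform grid x_i = a + iΔx), define G̃₂(i,j) = x_i·G̃₁(i,j) with G̃₁(i,j) = Δt Σ_{ℓ=0}^{j-1} D_{Δt}^α u_{i,ℓ}, and F̃₂(i,j) = (x_i K(u_{i-1,j}) - x_{i-1} K(u_{i,j}))/Δx. Then D_{Δx}(i ↦ F̃₂(i,j))(i) + D_{Δt}(j ↦ G̃₂(i,j))(j) = 0 at every interior grid point (i,j). -/

import Mathlib

/-- Second discrete conservation law of the scheme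
`D_{Δt}^α u_{i,j} = D^{(2)}_{Δx} K(u_{i,j})` on the uniform grid `x_i = a + iΔx`. -/
theorem second_discrete_conservation_law (a Δx Δt : ℝ) (hΔx : 0 < Δx) (hΔt : 0 < Δt)
    (K : ℝ → ℝ) (u Dα : ℤ → ℕ → ℝ)
    (hscheme : ∀ i j, Dα i j = (K (u (i+1) j) - 2*K (u i j) + K (u (i-1) j)) / Δx^2)
    (i : ℤ) (j : ℕ) :
    ((fun (m : ℤ) => ((a + (m:ℝ)*Δx) * K (u (m-1) j) - (a + ((m:ℝ)-1)*Δx) * K (u m j)) / Δx) (i+1) -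
     (fun (m : ℤ) => ((a + (m:ℝ)*Δx) * K (u (m-1) j) - (a + ((m:ℝ)-1)*Δx) * K (u m j)) / Δx) i) / Δx +
    ((fun n => (a + (i:ℝ)*Δx) * (Δt * ∑ ℓ ∈ Finset.range n, Dα i ℓ)) (j+1) -
     (fun n => (a + (i:ℝ)*Δx) * (Δt * ∑ ℓ ∈ Finset.range n, Dα i ℓ)) j) / Δt = 0 := by
  simp only []
  rw [Finset.sum_range_succ, hscheme i j]
  have h1 : ((i:ℤ)+1-1 : ℤ) = i := by ring
  push_cast [h1]
  field_simp
  ring
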